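/- Let X_a, X_b be linear subspaces of ℝⁿ with X_a ∩ X_b = {0}, and let π^b denote the orthogonal projection onto X_b^⊥. Let μ > 0 and let ψ, φ : X_a^⊥ → ℂ be Schwartz functions. Then there exists a constant C > 0 such that for all x_a ∈ X_a: ∫_{X_a^⊥} (1+‖π^b(x_a + w)‖)^{−μ} |ψ(w)| |φ(w)| dw ≤ C (1+‖x_a‖)^{−μ}, where dw denotes Lebesgue measure on X_a^⊥. -/

import Mathlib

open Submodule MeasureTheory

set_option maxHeartbeats 1000000

/-- If `Xa ⊓ Xb = ⊥`, the orthogonal projection onto `Xbᗮ` is bounded below on `Xa`. -/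
lemma proj_lower_bound {n : ℕ} (Xa Xb : Submodule ℝ (EuclideanSpace ℝ (Fin n)))
    (hXab : Xa ⊓ Xb = ⊥) :
    ∃ c : ℝ, 0 < c ∧ ∀ x : Xa, c * ‖(x : EuclideanSpace ℝ (Fin n))‖ ≤
      ‖(orthogonalProjection Xbᗮ (x : EuclideanSpace ℝ (Fin n)) :
        EuclideanSpace ℝ (Fin n))‖ := by
  set T : Xa →ₗ[ℝ] Xbᗮ :=
    ((orthogonalProjection Xbᗮ).toLinearMap).comp Xa.subtype with hT
  have hinj : Function.Injective T := by
    rw [← LinearMap.ker_eq_bot, LinearMap.ker_eq_bot']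
    intro x hx
    have hmem : ((x : EuclideanSpace ℝ (Fin n))) ∈ Xbᗮᗮ :=
      orthogonalProjection_eq_zero_iff.mp hx
    rw [Submodule.orthogonal_orthogonal] at hmem
    have hx2 : (x : EuclideanSpace ℝ (Fin n)) ∈ Xa ⊓ Xb := ⟨x.2, hmem⟩
    rw [hXab] at hx2
    exact Subtype.ext hx2
  let e := LinearEquiv.ofInjective T hinj
  let g : (LinearMap.range T) →L[ℝ] Xa := LinearMap.toContinuousLinearMap e.symm.toLinearMap
  refine ⟨(‖g‖ + 1)⁻¹, by positivity, fun x => ?_⟩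
  have hgx : g (e x) = x := e.symm_apply_apply x
  have hnorm : ‖e x‖ = ‖T x‖ := rfl
  have h1 : ‖x‖ ≤ (‖g‖ + 1) * ‖T x‖ := by
    calc ‖x‖ = ‖g (e x)‖ := by rw [hgx]
    _ ≤ ‖g‖ * ‖e x‖ := g.le_opNorm _
    _ = ‖g‖ * ‖T x‖ := by rw [hnorm]
    _ ≤ (‖g‖ + 1) * ‖T x‖ := by
        have := norm_nonneg (T x); nlinarith [norm_nonneg g]
  have hx' : ‖(x : EuclideanSpace ℝ (Fin n))‖ = ‖x‖ := rfl
  have hTx : ‖T x‖ = ‖(orthogonalProjection Xbᗮ (x : EuclideanSpace ℝ (Fin n)) :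
      EuclideanSpace ℝ (Fin n))‖ := rfl
  rw [hx', ← hTx, inv_mul_le_iff₀ (by positivity)]
  exact h1

/-- Rapid decay of the matrix element `E_a I_a E_a`: pairing a potential decaying at
rate `μ` on `X_b^⊥` (with `X_a ∩ X_b = {0}`) against two Schwartz bound states on
`X_a^⊥` yields a function of `x_a ∈ X_a` decaying at the same rate `μ`. -/
theorem matrix_element_decay (n : ℕ)
    (Xa Xb : Submodule ℝ (EuclideanSpace ℝ (Fin n))) (hXab : Xa ⊓ Xb = ⊥)
    (μ : ℝ) (hμ : 0 < μ)
    (ψ φ : SchwartzMap Xaᗮ ℂ) :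
    ∃ C : ℝ, 0 < C ∧ ∀ xa : Xa,
      (∫ w : Xaᗮ,
          (1 + ‖(orthogonalProjection Xbᗮ ((xa : EuclideanSpace ℝ (Fin n)) + w) :
            EuclideanSpace ℝ (Fin n))‖) ^ (-μ) * ‖ψ w‖ * ‖φ w‖) ≤
        C * (1 + ‖(xa : EuclideanSpace ℝ (Fin n))‖) ^ (-μ) := by
  obtain ⟨c, hc0, hc⟩ := proj_lower_bound Xa Xb hXab
  set m : ℝ := min c 1 with hm
  have hm0 : 0 < m := lt_min hc0 one_pos
  have hm1 : m ≤ 1 := min_le_right _ _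
  have hmc : m ≤ c := min_le_left _ _
  set k : ℕ := ⌈μ⌉₊ with hk
  have hμk : μ ≤ (k : ℝ) := Nat.le_ceil μ
  -- the dominating function
  set h : Xaᗮ → ℝ := fun w => (1 + ‖w‖) ^ μ * ‖ψ w‖ * ‖φ w‖ with hh
  have hhnn : ∀ w, 0 ≤ h w := fun w => by
    have : (0:ℝ) ≤ (1 + ‖w‖) ^ μ := Real.rpow_nonneg (by positivity) _
    positivity
  -- integrability of the dominating function
  set Mφ : ℝ := (SchwartzMap.seminorm ℝ 0 0) φ with hMφ
  have hMφnn : 0 ≤ Mφ := apply_nonneg _ _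
  have hφle : ∀ w, ‖φ w‖ ≤ Mφ := fun w => SchwartzMap.norm_le_seminorm ℝ φ w
  have hint : Integrable h := by
    have hmaj : Integrable (fun w : Xaᗮ =>
        Mφ * (2 ^ k * (‖w‖ ^ 0 * ‖ψ w‖ + ‖w‖ ^ k * ‖ψ w‖))) :=
      (((ψ.integrable_pow_mul volume 0).add
        (ψ.integrable_pow_mul volume k)).const_mul _).const_mul _
    refine hmaj.mono' ?_ (Filter.Eventually.of_forall fun w => ?_)
    · apply Continuous.aestronglyMeasurable
      exact (((continuous_const.add continuous_norm).rpow_const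
        (fun w => Or.inl (ne_of_gt (add_pos_of_pos_of_nonneg one_pos (norm_nonneg _))))).mul ψ.continuous.norm).mul φ.continuous.norm
    · have hb : (0:ℝ) < 1 + ‖w‖ := by positivity
      have h1 : (1 + ‖w‖) ^ μ ≤ (1 + ‖w‖) ^ (k : ℝ) :=
        Real.rpow_le_rpow_of_exponent_le (by linarith [norm_nonneg w]) hμk
      have h2 : (1 + ‖w‖) ^ (k : ℝ) = (1 + ‖w‖) ^ k := Real.rpow_natCast _ _
      have h3 : (1 + ‖w‖) ^ k ≤ 2 ^ k * (1 + ‖w‖ ^ k) := by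
        calc (1 + ‖w‖) ^ k ≤ (2 * max 1 ‖w‖) ^ k := by
              apply pow_le_pow_left₀ hb.le
              have := le_max_left (1:ℝ) ‖w‖
              have := le_max_right (1:ℝ) ‖w‖
              linarith
        _ = 2 ^ k * (max 1 ‖w‖) ^ k := by rw [mul_pow]
        _ ≤ 2 ^ k * (1 + ‖w‖ ^ k) := by
              apply mul_le_mul_of_nonneg_left _ (by positivity)
              rcases max_cases (1:ℝ) ‖w‖ with ⟨he, _⟩ | ⟨he, _⟩ <;> rw [he]
              · rw [one_pow]; linarith [pow_nonneg (norm_nonneg w) k]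
              · linarith [pow_nonneg (norm_nonneg w) k]
      have hψnn : (0:ℝ) ≤ ‖ψ w‖ := norm_nonneg _
      have hrnn : (0:ℝ) ≤ (1 + ‖w‖) ^ μ := Real.rpow_nonneg hb.le _
      have : ‖h w‖ = h w := Real.norm_of_nonneg (hhnn w)
      rw [this, hh]
      calc (1 + ‖w‖) ^ μ * ‖ψ w‖ * ‖φ w‖
          ≤ (1 + ‖w‖) ^ μ * ‖ψ w‖ * Mφ := by
            apply mul_le_mul_of_nonneg_left (hφle w) (by positivity)
        _ ≤ (2 ^ k * (1 + ‖w‖ ^ k)) * ‖ψ w‖ * Mφ := by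
            have := h1.trans (h2.le.trans h3)
            apply mul_le_mul_of_nonneg_right _ hMφnn
            exact mul_le_mul_of_nonneg_right this hψnn
        _ = Mφ * (2 ^ k * (‖w‖ ^ 0 * ‖ψ w‖ + ‖w‖ ^ k * ‖ψ w‖)) := by
            rw [pow_zero]; ring
  have hIh : 0 ≤ ∫ w, h w := integral_nonneg hhnn
  have hmμ : 0 < m ^ (-μ) := Real.rpow_pos_of_pos hm0 _
  refine ⟨m ^ (-μ) * ((∫ w, h w) + 1), by positivity, fun xa => ?_⟩
  set A : ℝ := 1 + ‖(xa : EuclideanSpace ℝ (Fin n))‖ with hA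
  have hA0 : 0 < A := by have := norm_nonneg (xa : EuclideanSpace ℝ (Fin n)); positivity
  have hAμ : 0 < A ^ (-μ) := Real.rpow_pos_of_pos hA0 _
  -- pointwise bound
  have hpt : ∀ w : Xaᗮ,
      (1 + ‖(orthogonalProjection Xbᗮ ((xa : EuclideanSpace ℝ (Fin n)) + w) :
        EuclideanSpace ℝ (Fin n))‖) ^ (-μ) * ‖ψ w‖ * ‖φ w‖ ≤
      (m ^ (-μ) * A ^ (-μ)) * h w := by
    intro w
    set P : ℝ := 1 + ‖(orthogonalProjection Xbᗮ ((xa : EuclideanSpace ℝ (Fin n)) + w) :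
      EuclideanSpace ℝ (Fin n))‖ with hP
    set W : ℝ := 1 + ‖(w : EuclideanSpace ℝ (Fin n))‖ with hW
    have hP0 : 0 < P := by
      have := norm_nonneg ((orthogonalProjection Xbᗮ
        ((xa : EuclideanSpace ℝ (Fin n)) + w) : EuclideanSpace ℝ (Fin n))); positivity
    have hW0 : 0 < W := by
      have := norm_nonneg (w : EuclideanSpace ℝ (Fin n)); positivity
    have hWnorm : ‖w‖ = ‖(w : EuclideanSpace ℝ (Fin n))‖ := rfl
    -- key inequality : m * A ≤ P * W
    have hkey : m * A ≤ P * W := by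
      have hproj_w : ‖(orthogonalProjection Xbᗮ (w : EuclideanSpace ℝ (Fin n)) :
          EuclideanSpace ℝ (Fin n))‖ ≤ ‖(w : EuclideanSpace ℝ (Fin n))‖ := by
        calc ‖(orthogonalProjection Xbᗮ (w : EuclideanSpace ℝ (Fin n)) :
            EuclideanSpace ℝ (Fin n))‖
            = ‖orthogonalProjection Xbᗮ (w : EuclideanSpace ℝ (Fin n))‖ := rfl
          _ ≤ ‖orthogonalProjection Xbᗮ‖ * ‖(w : EuclideanSpace ℝ (Fin n))‖ :=
              (orthogonalProjection Xbᗮ).le_opNorm _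
          _ ≤ 1 * ‖(w : EuclideanSpace ℝ (Fin n))‖ := by
              apply mul_le_mul_of_nonneg_right (orthogonalProjection_norm_le _)
                (norm_nonneg _)
          _ = ‖(w : EuclideanSpace ℝ (Fin n))‖ := one_mul _
      have hadd : (orthogonalProjection Xbᗮ ((xa : EuclideanSpace ℝ (Fin n)) + w) :
          EuclideanSpace ℝ (Fin n)) =
          (orthogonalProjection Xbᗮ (xa : EuclideanSpace ℝ (Fin n)) :
            EuclideanSpace ℝ (Fin n)) +
          (orthogonalProjection Xbᗮ (w : EuclideanSpace ℝ (Fin n)) :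
            EuclideanSpace ℝ (Fin n)) := by
        rw [map_add]; rfl
      have htri : ‖(orthogonalProjection Xbᗮ (xa : EuclideanSpace ℝ (Fin n)) :
          EuclideanSpace ℝ (Fin n))‖ ≤
          ‖(orthogonalProjection Xbᗮ ((xa : EuclideanSpace ℝ (Fin n)) + w) :
            EuclideanSpace ℝ (Fin n))‖ +
          ‖(orthogonalProjection Xbᗮ (w : EuclideanSpace ℝ (Fin n)) :
            EuclideanSpace ℝ (Fin n))‖ := by
        rw [hadd]
        exact norm_le_add_norm_add _ _
      have hlow := hc xa
      have hxann := norm_nonneg (xa : EuclideanSpace ℝ (Fin n))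
      have hwnn := norm_nonneg (w : EuclideanSpace ℝ (Fin n))
      have hPn : ‖(orthogonalProjection Xbᗮ ((xa : EuclideanSpace ℝ (Fin n)) + w) :
          EuclideanSpace ℝ (Fin n))‖ = P - 1 := by rw [hP]; ring
      have hP1 : (1:ℝ) ≤ P := by
        rw [hP]
        linarith [norm_nonneg ((orthogonalProjection Xbᗮ
          ((xa : EuclideanSpace ℝ (Fin n)) + w) : EuclideanSpace ℝ (Fin n)))]
      have step1 : m * A ≤ 1 + c * ‖(xa : EuclideanSpace ℝ (Fin n))‖ := by
        rw [hA]; nlinarith [mul_le_mul_of_nonneg_right hmc hxann]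
      have step2 : c * ‖(xa : EuclideanSpace ℝ (Fin n))‖ ≤
          (P - 1) + ‖(w : EuclideanSpace ℝ (Fin n))‖ := by
        rw [hPn] at htri; linarith
      rw [hW]
      nlinarith [mul_nonneg (by linarith : (0:ℝ) ≤ P - 1) hwnn]
    -- turn into rpow bound
    have hdiv : m * A / W ≤ P := by
      rw [div_le_iff₀ hW0]; exact hkey
    have hdiv0 : 0 < m * A / W := by positivity
    have hr : P ^ (-μ) ≤ (m * A / W) ^ (-μ) :=
      Real.rpow_le_rpow_of_nonpos hdiv0 hdiv (by linarith)
    have heq : (m * A / W) ^ (-μ) = m ^ (-μ) * A ^ (-μ) * W ^ μ := by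
      rw [Real.div_rpow (by positivity) (by positivity),
        Real.mul_rpow (le_of_lt hm0) (le_of_lt hA0),
        Real.rpow_neg (le_of_lt hW0), div_eq_mul_inv, inv_inv]
    have h4 : P ^ (-μ) ≤ m ^ (-μ) * A ^ (-μ) * W ^ μ := heq ▸ hr
    have hψφ : (0:ℝ) ≤ ‖ψ w‖ * ‖φ w‖ := by positivity
    calc P ^ (-μ) * ‖ψ w‖ * ‖φ w‖ = P ^ (-μ) * (‖ψ w‖ * ‖φ w‖) := by ring
      _ ≤ (m ^ (-μ) * A ^ (-μ) * W ^ μ) * (‖ψ w‖ * ‖φ w‖) :=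
          mul_le_mul_of_nonneg_right h4 hψφ
      _ = (m ^ (-μ) * A ^ (-μ)) * h w := by
          rw [hh]
          simp only [hWnorm]
          ring
  -- integrate the pointwise bound
  have hmono : (∫ w : Xaᗮ,
      (1 + ‖(orthogonalProjection Xbᗮ ((xa : EuclideanSpace ℝ (Fin n)) + w) :
        EuclideanSpace ℝ (Fin n))‖) ^ (-μ) * ‖ψ w‖ * ‖φ w‖) ≤
      ∫ w : Xaᗮ, (m ^ (-μ) * A ^ (-μ)) * h w := by
    apply integral_mono_of_nonneg
    · refine Filter.Eventually.of_forall fun w => ?_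
      have : (0:ℝ) ≤ (1 + ‖(orthogonalProjection Xbᗮ
          ((xa : EuclideanSpace ℝ (Fin n)) + w) : EuclideanSpace ℝ (Fin n))‖) ^ (-μ) :=
        Real.rpow_nonneg (by positivity) _
      positivity
    · exact hint.const_mul _
    · exact Filter.Eventually.of_forall hpt
  calc (∫ w : Xaᗮ,
      (1 + ‖(orthogonalProjection Xbᗮ ((xa : EuclideanSpace ℝ (Fin n)) + w) :
        EuclideanSpace ℝ (Fin n))‖) ^ (-μ) * ‖ψ w‖ * ‖φ w‖)
      ≤ ∫ w : Xaᗮ, (m ^ (-μ) * A ^ (-μ)) * h w := hmono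
    _ = (m ^ (-μ) * A ^ (-μ)) * ∫ w, h w := integral_const_mul _ _
    _ ≤ (m ^ (-μ) * ((∫ w, h w) + 1)) * A ^ (-μ) := by nlinarith
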